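/- If the partial order ≿ on X is crown-free and diamond-free, then every set P of preferences on X possesses a minimum upper bound with respect to single-crossing dominance. -/

import Mathlib

variable {X : Type*}

/-- Strict part of a binary relation. -/
def SPref (R : X → X → Prop) (x y : X) : Prop := R x y ∧ ¬ R y x

/-- A preference: a complete and transitive binary relation. -/
def IsPref (R : X → X → Prop) : Prop := (∀ x y, R x y ∨ R y x) ∧ Transitive R

/-- Single-crossing dominance (`R'` dominates `R`) w.r.t. the partial order `≤`. -/
def SC [PartialOrder X] (R' R : X → X → Prop) : Prop :=
  ∀ x y : X, y ≤ x → (R x y → R' x y) ∧ (SPref R x y → SPref R' x y)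

/-- Upper bound of a set of preferences w.r.t. single-crossing dominance. -/
def IsUB [PartialOrder X] (P : Set (X → X → Prop)) (R' : X → X → Prop) : Prop :=
  IsPref R' ∧ ∀ R ∈ P, SC R' R

/-- Minimum upper bound of a set of preferences w.r.t. single-crossing dominance. -/
def IsMUB [PartialOrder X] (P : Set (X → X → Prop)) (Rs : X → X → Prop) : Prop :=
  IsUB P Rs ∧ ∀ R'', IsUB P R'' → SC R'' Rs

/-- A `K`-crown (K ≥ 4 even) for the relation `le`, indexed by `1,…,K` with the cyclic
convention `a (K+1) = a 1`: non-adjacent elements are incomparable, and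
`a (k-1) > a k < a (k+1)` for each even `k` with `1 < k ≤ K`. -/
def IsCrown (le : X → X → Prop) (K : ℕ) (a : ℕ → X) : Prop :=
  4 ≤ K ∧ Even K ∧
  (∀ k k', 1 ≤ k → k + 2 ≤ k' → k' ≤ K → ¬(k = 1 ∧ k' = K) →
    ¬ le (a k) (a k') ∧ ¬ le (a k') (a k)) ∧
  (∀ k, 1 < k → k ≤ K → Even k →
    (le (a k) (a (k - 1)) ∧ ¬ le (a (k - 1)) (a k)) ∧
    (le (a k) (a (if k = K then 1 else k + 1)) ∧
      ¬ le (a (if k = K then 1 else k + 1)) (a k)))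

/-- `le` contains no crowns. -/
def CrownFree (le : X → X → Prop) : Prop := ¬ ∃ K a, IsCrown le K a

/-- A diamond: `a ≥ b ≥ d`, `a ≥ c ≥ d`, with `b, c` incomparable. -/
def IsDiamond (le : X → X → Prop) (a b c d : X) : Prop :=
  le b a ∧ le d b ∧ le c a ∧ le d c ∧ ¬ le b c ∧ ¬ le c b

/-- `le` contains no diamonds. -/
def DiamondFree (le : X → X → Prop) : Prop := ¬ ∃ a b c d, IsDiamond le a b c d

namespace MubProof

open Relation

variable {Y : Type*} [PartialOrder Y]

/-- forced weak relation (one step): some preference in `P` weakly raises `x` over `y < x`. -/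
def W0 (P : Set (Y → Y → Prop)) (x y : Y) : Prop := y < x ∧ ∃ R ∈ P, R x y

/-- forced strict relation (one step). -/
def S0 (P : Set (Y → Y → Prop)) (x y : Y) : Prop := y < x ∧ ∃ R ∈ P, SPref R x y

/-- forced weak relation (closure). -/
def Wc (P : Set (Y → Y → Prop)) : Y → Y → Prop := Relation.TransGen (W0 P)

/-- forced strict relation (closure): a weak chain containing a strict step. -/
def Sc (P : Set (Y → Y → Prop)) (x y : Y) : Prop :=
  ∃ u v, ReflTransGen (W0 P) x u ∧ S0 P u v ∧ ReflTransGen (W0 P) v y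

/-- the pattern edges of the minimum upper bound on comparable pairs. -/
def Epat (P : Set (Y → Y → Prop)) (x y : Y) : Prop :=
  (y < x ∧ Wc P x y) ∨ (x < y ∧ ¬ Sc P y x)

/-- "strictly forbidden" pairs: `a` must be strictly above `b` in the pattern. -/
def SPat (P : Set (Y → Y → Prop)) (a b : Y) : Prop :=
  (b < a ∧ Sc P a b) ∨ (a < b ∧ ¬ Wc P b a)

variable {P : Set (Y → Y → Prop)}

lemma s0_w0 {x y : Y} (h : S0 P x y) : W0 P x y :=
  ⟨h.1, h.2.choose, h.2.choose_spec.1, h.2.choose_spec.2.1⟩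

lemma wr_le {x y : Y} (h : ReflTransGen (W0 P) x y) : y ≤ x := by
  induction h with
  | refl => exact le_refl _
  | tail _ h ih => exact h.1.le.trans ih

lemma wc_lt {x y : Y} (h : Wc P x y) : y < x := by
  induction h with
  | single h => exact h.1
  | tail _ h ih => exact h.1.trans ih

lemma sc_wc {x y : Y} (h : Sc P x y) : Wc P x y := by
  obtain ⟨u, v, h1, h2, h3⟩ := h
  exact (TransGen.tail' h1 (s0_w0 h2)).trans_left h3

lemma sc_lt {x y : Y} (h : Sc P x y) : y < x := wc_lt (sc_wc h)

lemma sc_of_s0 {x y : Y} (h : S0 P x y) : Sc P x y :=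
  ⟨x, y, ReflTransGen.refl, h, ReflTransGen.refl⟩

lemma sc_comp_wr {x y z : Y} (h : Sc P x y) (h' : ReflTransGen (W0 P) y z) : Sc P x z := by
  obtain ⟨u, v, h1, h2, h3⟩ := h
  exact ⟨u, v, h1, h2, h3.trans h'⟩

lemma wr_comp_sc {x y z : Y} (h : ReflTransGen (W0 P) x y) (h' : Sc P y z) : Sc P x z := by
  obtain ⟨u, v, h1, h2, h3⟩ := h'
  exact ⟨u, v, h.trans h1, h2, h3⟩

lemma sc_comp_w0 {x y z : Y} (h : Sc P x y) (h' : W0 P y z) : Sc P x z :=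
  sc_comp_wr h (ReflTransGen.single h')

lemma w0_comp_sc {x y z : Y} (h : W0 P x y) (h' : Sc P y z) : Sc P x z :=
  wr_comp_sc (ReflTransGen.single h) h'

lemma sc_comp_wc {x y z : Y} (h : Sc P x y) (h' : Wc P y z) : Sc P x z :=
  sc_comp_wr h h'.to_reflTransGen

lemma wc_comp_sc {x y z : Y} (h : Wc P x y) (h' : Sc P y z) : Sc P x z :=
  wr_comp_sc h.to_reflTransGen h'

/-- diamond-freeness: intervals are chains. -/
lemma cmp_interval (hdiamond : DiamondFree ((· ≤ ·) : Y → Y → Prop))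
    {a b c d : Y} (h1 : b ≤ a) (h2 : d ≤ b) (h3 : c ≤ a) (h4 : d ≤ c) :
    b ≤ c ∨ c ≤ b := by
  by_contra h
  push_neg at h
  exact hdiamond ⟨a, b, c, d, h1, h2, h3, h4, h.1, h.2⟩

/-- single-arc splitting. -/
lemma arc (hP : ∀ R ∈ P, IsPref R) {R : Y → Y → Prop} (hR : R ∈ P) {c c' β : Y} (hcc' : R c c')
    (h1 : c' < β) (h2 : β < c) :
    S0 P c β ∨ S0 P β c' ∨ (W0 P c β ∧ W0 P β c' ∧ R c β ∧ R β c') := by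
  obtain ⟨hcomp, htrans⟩ := hP R hR
  by_cases hcb : R c β
  · by_cases hbc' : R β c'
    · exact Or.inr (Or.inr ⟨⟨h2, R, hR, hcb⟩, ⟨h1, R, hR, hbc'⟩, hcb, hbc'⟩)
    · exact Or.inl ⟨h2, R, hR, hcb, fun hbc => hbc' (htrans hbc hcc')⟩
  · have hbc : R β c := (hcomp c β).resolve_left hcb
    have hbc' : R β c' := htrans hbc hcc'
    exact Or.inr (Or.inl ⟨h1, R, hR, hbc', fun hc'b => hcb (htrans hcc' hc'b)⟩)

lemma L1 (hP : ∀ R ∈ P, IsPref R) (hdiamond : DiamondFree ((· ≤ ·) : Y → Y → Prop)) : ∀ {α γ : Y}, Wc P α γ → ∀ β, γ < β → β < α → Wc P α β ∨ Sc P β γ := by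
  intro α γ h
  induction h with
  | single h =>
    intro β h1 h2
    obtain ⟨hlt, R, hR, hRxy⟩ := h
    rcases arc hP hR hRxy h1 h2 with hs | hs | ⟨hw, _, _, _⟩
    · exact Or.inl (TransGen.single (s0_w0 hs))
    · exact Or.inr (sc_of_s0 hs)
    · exact Or.inl (TransGen.single hw)
  | @tail b c hW harc ih =>
    intro β h1 h2
    have hbα : b < _ := wc_lt hW
    have hcb : c < b := harc.1
    have hcomp : β ≤ b ∨ b ≤ β :=
      cmp_interval hdiamond h2.le h1.le hbα.le hcb.le
    rcases hcomp with h | h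
    · rcases h.lt_or_eq with hlt | heq
      · obtain ⟨_, R, hR, hRbc⟩ := harc
        rcases arc hP hR hRbc h1 hlt with hs | hs | ⟨hw, _, _, _⟩
        · exact Or.inl (hW.tail (s0_w0 hs))
        · exact Or.inr (sc_of_s0 hs)
        · exact Or.inl (hW.tail hw)
      · subst heq; exact Or.inl hW
    · rcases h.lt_or_eq with hlt | heq
      · rcases ih β hlt h2 with hw | hs
        · exact Or.inl hw
        · exact Or.inr (sc_comp_w0 hs harc)
      · subst heq; exact Or.inl hW

lemma L2 (hP : ∀ R ∈ P, IsPref R) (hdiamond : DiamondFree ((· ≤ ·) : Y → Y → Prop)) : ∀ {α γ : Y}, Wc P α γ → ∀ β, γ < β → β < α → Wc P β γ ∨ Sc P α β := by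
  intro α γ h
  induction h using Relation.TransGen.head_induction_on with
  | single h =>
    intro β h1 h2
    obtain ⟨hlt, R, hR, hRxy⟩ := h
    rcases arc hP hR hRxy h1 h2 with hs | hs | ⟨_, hw, _, _⟩
    · exact Or.inr (sc_of_s0 hs)
    · exact Or.inl (TransGen.single (s0_w0 hs))
    · exact Or.inl (TransGen.single hw)
  | @head α' c h' hW ih =>
    intro β h1 h2
    have hcγ : _ < c := wc_lt hW
    have hcα : c < α' := h'.1
    have hcomp : β ≤ c ∨ c ≤ β :=
      cmp_interval hdiamond h2.le h1.le hcα.le hcγ.le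
    rcases hcomp with h | h
    · rcases h.lt_or_eq with hlt | heq
      · rcases ih β h1 hlt with hw | hs
        · exact Or.inl hw
        · exact Or.inr (w0_comp_sc h' hs)
      · subst heq; exact Or.inl hW
    · rcases h.lt_or_eq with hlt | heq
      · obtain ⟨_, R, hR, hRbc⟩ := h'
        rcases arc hP hR hRbc hlt h2 with hs | hs | ⟨_, hw, _, _⟩
        · exact Or.inr (sc_of_s0 hs)
        · exact Or.inl (hW.head (s0_w0 hs))
        · exact Or.inl (hW.head hw)
      · subst heq; exact Or.inl hW

lemma L5 (hP : ∀ R ∈ P, IsPref R) (hdiamond : DiamondFree ((· ≤ ·) : Y → Y → Prop)) : ∀ {α γ : Y}, Sc P α γ → ∀ β, γ < β → β < α → Sc P α β ∨ Sc P β γ := by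
  intro α γ hS β h1 h2
  obtain ⟨u, v, hxu, huv, hvy⟩ := hS
  have hvu : v < u := huv.1
  have huα : u ≤ α := wr_le hxu
  have hγv : γ ≤ v := wr_le hvy
  -- compare β with u and v
  have hcompu : β ≤ u ∨ u ≤ β :=
    cmp_interval hdiamond h2.le h1.le huα (hγv.trans hvu.le)
  have hcompv : β ≤ v ∨ v ≤ β :=
    cmp_interval hdiamond h2.le h1.le (hvu.le.trans huα) hγv
  rcases hcompu with hu | hu
  · rcases hu.lt_or_eq with hβu | hβu
    · -- β < u
      rcases hcompv with hv | hv
      · rcases hv.lt_or_eq with hβv | hβv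
        · -- β < v : split W v γ at β
          have hvγ : Wc P v γ := by
            rcases (reflTransGen_iff_eq_or_transGen.mp hvy) with heq | ht
            · exfalso; rw [heq] at h1; exact lt_irrefl _ (h1.trans hβv)
            · exact ht
          rcases L1 hP hdiamond hvγ β h1 hβv with hw | hs
          · exact Or.inl ⟨u, v, hxu, huv, hw.to_reflTransGen⟩
          · exact Or.inr hs
        · subst hβv; exact Or.inl ⟨u, β, hxu, huv, ReflTransGen.refl⟩
      · rcases hv.lt_or_eq with hvβ | hvβ
        · -- v < β < u : use the strict arc
          obtain ⟨_, R, hR, hsp⟩ := huv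
          rcases arc hP hR hsp.1 hvβ hβu with hs | hs | ⟨hw1, hw2, hRub, hRbv⟩
          · exact Or.inl (sc_comp_wr (wr_comp_sc hxu (sc_of_s0 hs)) ReflTransGen.refl)
          · exact Or.inr (sc_comp_wr (sc_of_s0 hs) hvy)
          · -- R u β, R β v, ¬ R v u: one of the two splits is strict
            obtain ⟨_, htrans⟩ := hP R hR
            by_cases hbu : R β u
            · have : ¬ R v β := fun hvb => hsp.2 (htrans hvb hbu)
              exact Or.inr (sc_comp_wr (sc_of_s0 ⟨hvβ, R, hR, hRbv, this⟩) hvy)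
            · exact Or.inl (wr_comp_sc hxu (sc_comp_wr (sc_of_s0 ⟨hβu, R, hR, hRub, hbu⟩) ReflTransGen.refl))
        · -- β = v
          exact Or.inl ⟨u, v, hxu, huv, by rw [hvβ]⟩
    · -- β = u
      exact Or.inr ⟨u, v, by rw [hβu], huv, hvy⟩
  · rcases hu.lt_or_eq with huβ | huβ
    · -- u < β < α : split W α u at β
      have hαu : Wc P α u := by
        rcases (reflTransGen_iff_eq_or_transGen.mp hxu) with heq | ht
        · exfalso; rw [← heq] at h2; exact lt_irrefl _ (huβ.trans h2)
        · exact ht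
      rcases L2 hP hdiamond hαu β huβ h2 with hw | hs
      · exact Or.inr (wr_comp_sc hw.to_reflTransGen ⟨u, v, ReflTransGen.refl, huv, hvy⟩)
      · exact Or.inl hs
    · exact Or.inr ⟨u, v, by rw [← huβ], huv, hvy⟩

lemma e_lt {x y : Y} (h : Epat P x y) : y < x ∨ x < y := h.imp And.left And.left

lemma edge_vs_strict {a b : Y} (he : Epat P b a) (hs : SPat P a b) : False := by
  rcases hs with ⟨h1, h2⟩ | ⟨h1, h2⟩
  · rcases he with ⟨h3, _⟩ | ⟨_, h4⟩
    · exact lt_asymm h1 h3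
    · exact h4 h2
  · rcases he with ⟨_, h4⟩ | ⟨h3, _⟩
    · exact h2 h4
    · exact lt_asymm h1 h3

lemma spat_of_not_epat {x y : Y} (hne : x ≠ y) (hcmp : x ≤ y ∨ y ≤ x)
    (h : ¬ Epat P x y) : SPat P y x := by
  rcases hcmp with hc | hc
  · have hlt : x < y := hc.lt_of_ne hne
    exact Or.inl ⟨hlt, by_contra fun hs => h (Or.inr ⟨hlt, hs⟩)⟩
  · have hlt : y < x := hc.lt_of_ne hne.symm
    exact Or.inr ⟨hlt, fun hw => h (Or.inl ⟨hlt, hw⟩)⟩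

lemma triple (hP : ∀ R ∈ P, IsPref R) (hdiamond : DiamondFree ((· ≤ ·) : Y → Y → Prop))
    {u v w : Y} (h1 : Epat P u v) (h2 : Epat P v w) (hcmp : u ≤ w ∨ w ≤ u) :
    u = w ∨ Epat P u w := by
  by_cases he : u = w
  · exact Or.inl he
  rcases h1 with ⟨hvu, hW1⟩ | ⟨huv, hS1⟩
  · rcases h2 with ⟨hwv, hW2⟩ | ⟨hvw, hS2⟩
    · exact Or.inr (Or.inl ⟨hwv.trans hvu, hW1.trans hW2⟩)
    · rcases hcmp with hc | hc
      · have hlt : u < w := hc.lt_of_ne he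
        exact Or.inr (Or.inr ⟨hlt, fun hs => hS2 (sc_comp_wc hs hW1)⟩)
      · have hlt : w < u := hc.lt_of_ne (Ne.symm he)
        rcases L1 hP hdiamond hW1 w hvw hlt with hw | hs
        · exact Or.inr (Or.inl ⟨hlt, hw⟩)
        · exact absurd hs hS2
  · rcases h2 with ⟨hwv, hW2⟩ | ⟨hvw, hS2⟩
    · rcases hcmp with hc | hc
      · have hlt : u < w := hc.lt_of_ne he
        exact Or.inr (Or.inr ⟨hlt, fun hs => hS1 (wc_comp_sc hW2 hs)⟩)
      · have hlt : w < u := hc.lt_of_ne (Ne.symm he)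
        rcases L2 hP hdiamond hW2 u hlt huv with hw | hs
        · exact Or.inr (Or.inl ⟨hlt, hw⟩)
        · exact absurd hs hS1
    · have hlt : u < w := huv.trans hvw
      refine Or.inr (Or.inr ⟨hlt, fun hs => ?_⟩)
      rcases L5 hP hdiamond hs v huv hvw with h | h
      · exact hS2 h
      · exact hS1 h

lemma path_of_rtg {x y : Y} (h : ReflTransGen (Epat P) x y) :
    ∃ (n : ℕ) (p : ℕ → Y), p 0 = x ∧ p n = y ∧ ∀ i < n, Epat P (p i) (p (i+1)) := by
  induction h with
  | refl => exact ⟨0, fun _ => x, rfl, rfl, by omega⟩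
  | @tail b c _ hbc ih =>
    obtain ⟨n, p, h0, hn, hp⟩ := ih
    refine ⟨n+1, fun i => if i ≤ n then p i else c, ?_, ?_, ?_⟩
    · simpa using h0
    · simp
    · intro i hi
      by_cases h1 : i < n
      · have e1 : i ≤ n := by omega
        have e2 : i + 1 ≤ n := by omega
        simp only [if_pos e1, if_pos e2]
        exact hp i h1
      · have hieq : i = n := by omega
        subst hieq
        simp only [if_pos (le_refl i), if_neg (show ¬ i + 1 ≤ i by omega)]
        rw [hn]
        exact hbc

/-- an alternating cycle with incomparable non-adjacent elements yields a crown. -/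
lemma crown_of_cycle (hcrown : CrownFree ((· ≤ ·) : Y → Y → Prop)) (N : ℕ) (hN : 4 ≤ N)
    (q : ℕ → Y)
    (hper : ∀ i, q (i + N) = q i)
    (hstep : ∀ i, q i < q (i+1) ∨ q (i+1) < q i)
    (hincg : ∀ i d, 2 ≤ d → d ≤ N - 2 → ¬ q i ≤ q (i+d) ∧ ¬ q (i+d) ≤ q i) : False := by
  have hinc2 : ∀ i, ¬ q i ≤ q (i+2) ∧ ¬ q (i+2) ≤ q i := fun i =>
    hincg i 2 (le_refl 2) (by omega)
  have halt : ∀ i, (q (i+1) < q (i+2)) ↔ ¬ (q i < q (i+1)) := by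
    intro i
    constructor
    · intro h1 h0
      exact (hinc2 i).1 (h0.trans h1).le
    · intro h0
      rcases hstep (i+1) with h | h
      · exact h
      · exfalso
        rcases hstep i with h' | h'
        · exact h0 h'
        · exact (hinc2 i).2 (h.trans h').le
  have hpar : ∀ i, (q i < q (i+1)) ↔ (Even i ↔ q 0 < q 1) := by
    intro i
    induction i with
    | zero => simp
    | succ k ih =>
      have h1 := halt k
      rw [ih] at h1
      rw [h1, Nat.even_add_one]
      tauto
  have hqN : q N = q 0 := by have := hper 0; simpa using this
  have hqN1 : q (N+1) = q 1 := by have := hper 1; rwa [Nat.add_comm 1 N] at this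
  have hEvenN : Even N := by
    have h1 := hpar N
    rw [hqN, hqN1] at h1
    tauto
  obtain ⟨t, htN, htnot⟩ : ∃ t, t ≤ 1 ∧ ¬ (q t < q (t+1)) := by
    by_cases h : q 0 < q 1
    · exact ⟨1, le_refl 1, fun h1 => (halt 0).mp h1 h⟩
    · exact ⟨0, by omega, h⟩
  have hUp : ∀ j, (Even j ↔ Even t) → ¬ (q j < q (j+1)) := by
    intro j hj
    have h1 := hpar j; have h2 := hpar t
    tauto
  apply hcrown
  refine ⟨N, fun k => q (k - 1 + t), hN, hEvenN, ?_, ?_⟩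
  · intro k k' hk1 hkk' hk'N hne
    have hne' : k ≠ 1 ∨ k' ≠ N := by tauto
    have hd2 : 2 ≤ k' - k := by omega
    have hdN : k' - k ≤ N - 2 := by omega
    have he : (k - 1 + t) + (k' - k) = k' - 1 + t := by omega
    have := hincg (k - 1 + t) (k' - k) hd2 hdN
    rw [he] at this
    exact this
  · intro k hk1 hkN hkE
    have hk2 : 2 ≤ k := hk1
    have hkmod : k % 2 = 0 := Nat.even_iff.mp hkE
    have hdown : ¬ (q (k - 2 + t) < q (k - 2 + t + 1)) := by
      apply hUp
      rw [Nat.even_iff, Nat.even_iff]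
      omega
    have hup : q (k - 2 + t + 1) < q (k - 2 + t + 2) := (halt (k - 2 + t)).mpr hdown
    have hlt1 : q (k - 1 + t) < q (k - 2 + t) := by
      rcases hstep (k - 2 + t) with h | h
      · exact absurd h hdown
      · have e : k - 2 + t + 1 = k - 1 + t := by omega
        rwa [e] at h
    have hlt2 : q (k - 1 + t) < q (k + t) := by
      have e1 : k - 2 + t + 1 = k - 1 + t := by omega
      have e2 : k - 2 + t + 2 = k + t := by omega
      rwa [e1, e2] at hup
    constructor
    · constructor
      · show q (k - 1 + t) ≤ q (k - 1 - 1 + t)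
        have e : k - 1 - 1 + t = k - 2 + t := by omega
        rw [e]; exact hlt1.le
      · show ¬ q (k - 1 - 1 + t) ≤ q (k - 1 + t)
        have e : k - 1 - 1 + t = k - 2 + t := by omega
        rw [e]; exact hlt1.not_ge
    · by_cases hkK : k = N
      · rw [if_pos hkK]
        have e1 : (1:ℕ) - 1 + t = t := by omega
        have hqwrap : q (k + t) = q t := by
          rw [hkK, Nat.add_comm N t, hper]
        rw [hqwrap] at hlt2
        constructor
        · show q (k - 1 + t) ≤ q (1 - 1 + t)
          rw [e1]; exact hlt2.le
        · show ¬ q (1 - 1 + t) ≤ q (k - 1 + t)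
          rw [e1]; exact hlt2.not_ge
      · rw [if_neg hkK]
        have e1 : k + 1 - 1 + t = k + t := by omega
        constructor
        · show q (k - 1 + t) ≤ q (k + 1 - 1 + t)
          rw [e1]; exact hlt2.le
        · show ¬ q (k + 1 - 1 + t) ≤ q (k - 1 + t)
          rw [e1]; exact hlt2.not_ge

lemma splice_step {n : ℕ}
    (IH : ∀ m, m < n → ∀ q : ℕ → Y, (∀ i < m, Epat P (q i) (q (i+1))) → SPat P (q m) (q 0) → False)
    (p : ℕ → Y) (i d : ℕ) (hd : 1 ≤ d) (hbound : i + 1 + d ≤ n)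
    (hpath : ∀ k < n, Epat P (p k) (p (k+1)))
    (hjump : Epat P (p i) (p (i + 1 + d)))
    (hsp : SPat P (p n) (p 0)) : False := by
  apply IH (n - d) (by omega) (fun k => if k ≤ i then p k else p (k + d))
  · intro k hk
    by_cases h1 : k + 1 ≤ i
    · have h2 : k ≤ i := by omega
      simp only [if_pos h1, if_pos h2]
      exact hpath k (by omega)
    · by_cases h2 : k ≤ i
      · have hki : k = i := by omega
        simp only [if_pos h2, if_neg h1]
        subst hki
        exact hjump
      · simp only [if_neg h2, if_neg (show ¬ k + 1 ≤ i by omega)]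
        have e : k + 1 + d = (k + d) + 1 := by omega
        rw [e]
        exact hpath (k + d) (by omega)
  · rw [if_neg (show ¬ n - d ≤ i by omega), if_pos (Nat.zero_le i),
      show n - d + d = n by omega]
    exact hsp

lemma no_bad_path (hP : ∀ R ∈ P, IsPref R)
    (hdiamond : DiamondFree ((· ≤ ·) : Y → Y → Prop))
    (hcrown : CrownFree ((· ≤ ·) : Y → Y → Prop)) :
    ∀ n (p : ℕ → Y), (∀ i < n, Epat P (p i) (p (i+1))) → SPat P (p n) (p 0) → False := by
  intro n
  induction n using Nat.strong_induction_on with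
  | _ n IH =>
  intro p hpath hsp
  rcases Nat.lt_or_ge n 2 with h2 | h2
  · interval_cases n
    · rcases hsp with ⟨h, _⟩ | ⟨h, _⟩ <;> exact lt_irrefl _ h
    · exact edge_vs_strict (hpath 0 (by omega)) hsp
  by_cases hbad : ∃ i j, i + 2 ≤ j ∧ j ≤ n ∧ ¬(i = 0 ∧ j = n) ∧ (p i ≤ p j ∨ p j ≤ p i)
  · obtain ⟨i, j, hij, hjn, hnij, hcmp⟩ := hbad
    have hij0 : i ≠ 0 ∨ j ≠ n := by tauto
    by_cases heq : p i = p j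
    · by_cases hjn' : j = n
      · exact IH i (by omega) p (fun k hk => hpath k (by omega))
          (by rw [heq, hjn']; exact hsp)
      · have hd : Epat P (p i) (p (i + 1 + (j - i))) := by
          have e : i + 1 + (j - i) = j + 1 := by omega
          rw [e, heq]
          exact hpath j (by omega)
        exact splice_step IH p i (j - i) (by omega) (by omega) hpath hd hsp
    · by_cases hE : Epat P (p i) (p j)
      · have hd : Epat P (p i) (p (i + 1 + (j - i - 1))) := by
          have e : i + 1 + (j - i - 1) = j := by omega
          rw [e]
          exact hE
        exact splice_step IH p i (j - i - 1) (by omega) (by omega) hpath hd hsp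
      · have hsp' : SPat P (p j) (p i) := spat_of_not_epat heq hcmp hE
        refine IH (j - i) (by omega) (fun k => p (i + k)) (fun k hk => ?_) ?_
        · show Epat P (p (i + k)) (p (i + (k + 1)))
          rw [show i + (k+1) = (i + k) + 1 by omega]
          exact hpath (i + k) (by omega)
        · show SPat P (p (i + (j - i))) (p (i + 0))
          rw [show i + (j - i) = j by omega, Nat.add_zero]
          exact hsp'
  · push_neg at hbad
    by_cases hn2 : n = 2
    · subst hn2
      have hcmp : p 0 ≤ p 2 ∨ p 2 ≤ p 0 := by
        rcases hsp with ⟨h, _⟩ | ⟨h, _⟩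
        · exact Or.inl h.le
        · exact Or.inr h.le
      rcases triple hP hdiamond (hpath 0 (by omega)) (hpath 1 (by omega)) hcmp with he | he
      · rw [← he] at hsp
        rcases hsp with ⟨h, _⟩ | ⟨h, _⟩ <;> exact lt_irrefl _ h
      · exact edge_vs_strict he hsp
    have h3 : 3 ≤ n := by omega
    set N := n + 1 with hNdef
    have hN0 : 0 < N := by omega
    apply crown_of_cycle hcrown N (by omega) (fun i => p (i % N))
    · intro i
      rw [Nat.add_mod_right]
    · intro i
      have h1N : 1 % N = 1 := Nat.mod_eq_of_lt (by omega)
      have hmod : (i + 1) % N = if i % N = n then 0 else i % N + 1 := by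
        rw [Nat.add_mod, h1N]
        by_cases h : i % N = n
        · rw [if_pos h, h, show n + 1 = N from rfl, Nat.mod_self]
        · have hlt : i % N < N := Nat.mod_lt _ hN0
          rw [if_neg h, Nat.mod_eq_of_lt (by omega)]
      rw [hmod]
      by_cases h : i % N = n
      · rw [if_pos h, h]
        rcases hsp with ⟨hlt, _⟩ | ⟨hlt, _⟩
        · exact Or.inr hlt
        · exact Or.inl hlt
      · rw [if_neg h]
        have hlt : i % N < n := by
          have := Nat.mod_lt i hN0
          omega
        rcases e_lt (hpath (i % N) hlt) with hh | hh
        · exact Or.inr hh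
        · exact Or.inl hh
    · intro i d hd2 hdN
      have hdn : d < N := by omega
      have hr : i % N < N := Nat.mod_lt _ hN0
      have hmod : (i + d) % N = (i % N + d) % N := by
        rw [Nat.add_mod, Nat.mod_eq_of_lt hdn]
      by_cases h : i % N + d < N
      · have he : (i + d) % N = i % N + d := by rw [hmod, Nat.mod_eq_of_lt h]
        rw [he]
        exact hbad (i % N) (i % N + d) (by omega) (by omega) (by omega)
      · have he : (i + d) % N = i % N + d - N := by
          rw [hmod, Nat.mod_eq_sub_mod (by omega), Nat.mod_eq_of_lt (by omega)]
        rw [he]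
        have := hbad (i % N + d - N) (i % N) (by omega) (by omega) (by omega)
        exact ⟨this.2, this.1⟩

end MubProof

/-- Existence: if the partial order is crown- and diamond-free, every set of preferences
has a minimum upper bound w.r.t. single-crossing dominance. -/
theorem mub_exists_of_crown_diamond_free (X : Type*) [Nonempty X] [PartialOrder X]
    (hcrown : CrownFree (· ≤ · : X → X → Prop))
    (hdiamond : DiamondFree (· ≤ · : X → X → Prop)) :
    ∀ P : Set (X → X → Prop), (∀ R ∈ P, IsPref R) → ∃ Rs, IsMUB P Rs := by
  intro P hP
  classical
  let E : X → X → Prop := MubProof.Epat P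
  let Q : X → X → Prop := Relation.ReflTransGen E
  have hQrefl : ∀ x, Q x x := fun _ => Relation.ReflTransGen.refl
  have hQtrans : ∀ {x y z}, Q x y → Q y z → Q x z := fun h1 h2 => h1.trans h2
  have mainW : ∀ {x y : X}, y < x → Q x y → MubProof.Wc P x y := by
    intro x y hlt h
    by_contra hnW
    obtain ⟨n, p, h0, hn, hp⟩ := MubProof.path_of_rtg h
    exact MubProof.no_bad_path hP hdiamond hcrown n p hp
      (by rw [hn, h0]; exact Or.inr ⟨hlt, hnW⟩)
  have mainS : ∀ {x y : X}, y < x → Q y x → ¬ MubProof.Sc P x y := by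
    intro x y hlt h hS
    obtain ⟨n, p, h0, hn, hp⟩ := MubProof.path_of_rtg h
    exact MubProof.no_bad_path hP hdiamond hcrown n p hp
      (by rw [hn, h0]; exact Or.inl ⟨hlt, hS⟩)
  have patCmp : ∀ {x y : X}, y < x → Q x y ∨ Q y x := by
    intro x y hlt
    by_cases hw : MubProof.Wc P x y
    · exact Or.inl (Relation.ReflTransGen.single (Or.inl ⟨hlt, hw⟩))
    · exact Or.inr (Relation.ReflTransGen.single
        (Or.inr ⟨hlt, fun hs => hw (MubProof.sc_wc hs)⟩))
  let sd : Setoid X := ⟨fun a b => Q a b ∧ Q b a,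
    ⟨fun a => ⟨hQrefl a, hQrefl a⟩, fun h => ⟨h.2, h.1⟩,
      fun h1 h2 => ⟨hQtrans h1.1 h2.1, hQtrans h2.2 h1.2⟩⟩⟩
  let rel : Quotient sd → Quotient sd → Prop :=
    Quotient.lift₂ (fun a b => Q b a)
      (by
        intro a b a' b' ha hb
        exact propext ⟨fun h => hQtrans (hQtrans hb.2 h) ha.1,
          fun h => hQtrans (hQtrans hb.1 h) ha.2⟩)
  haveI hpo : IsPartialOrder (Quotient sd) rel :=
    { refl := fun A => Quotient.inductionOn A (fun a => hQrefl a)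
      trans := fun A B C => Quotient.inductionOn₃ A B C
        (fun _ _ _ h1 h2 => hQtrans h2 h1)
      antisymm := fun A B => Quotient.inductionOn₂ A B
        (fun _ _ h1 h2 => Quotient.sound ⟨h2, h1⟩) }
  obtain ⟨s, hlin, hsub⟩ := extend_partialOrder rel
  haveI := hlin
  let Rs : X → X → Prop := fun x y => s (Quotient.mk sd y) (Quotient.mk sd x)
  have hQRs : ∀ {x y}, Q x y → Rs x y := fun {x y} h => hsub _ _ h
  have hRsTot : ∀ x y, Rs x y ∨ Rs y x := fun x y =>
    Std.Total.total (r := s) (Quotient.mk sd y) (Quotient.mk sd x)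
  have hRsTrans : Transitive Rs := fun _ _ _ h1 h2 => IsTrans.trans (r := s) _ _ _ h2 h1
  have hRsStrict : ∀ {x y}, Q x y → ¬ Q y x → ¬ Rs y x := by
    intro x y h1 h2 hr
    have heq : (Quotient.mk sd x) = (Quotient.mk sd y) :=
      Std.Antisymm.antisymm (r := s) _ _ hr (hQRs h1)
    exact h2 (Quotient.exact heq).2
  have hUBRs : IsUB P Rs := by
    refine ⟨⟨hRsTot, hRsTrans⟩, ?_⟩
    intro R hR x y hyx
    constructor
    · intro hRxy
      rcases hyx.lt_or_eq with hlt | heq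
      · exact hQRs (Relation.ReflTransGen.single
          (Or.inl ⟨hlt, Relation.TransGen.single ⟨hlt, R, hR, hRxy⟩⟩))
      · rw [heq]; exact hQRs (hQrefl x)
    · intro hsp
      rcases hyx.lt_or_eq with hlt | heq
      · have hS0 : MubProof.S0 P x y := ⟨hlt, R, hR, hsp⟩
        have hq : Q x y := Relation.ReflTransGen.single
          (Or.inl ⟨hlt, Relation.TransGen.single (MubProof.s0_w0 hS0)⟩)
        refine ⟨hQRs hq, hRsStrict hq ?_⟩
        intro hq'
        exact mainS hlt hq' (MubProof.sc_of_s0 hS0)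
      · exfalso
        rw [heq] at hsp
        exact hsp.2 hsp.1
  refine ⟨Rs, hUBRs, ?_⟩
  intro R'' hUB''
  have hR''refl : ∀ x, R'' x x := fun x => (hUB''.1.1 x x).elim id id
  have hR''trans : Transitive R'' := hUB''.1.2
  have hWc'' : ∀ {x y}, MubProof.Wc P x y → R'' x y := by
    intro x y h
    induction h with
    | single h =>
      obtain ⟨hlt, R, hRP, hRxy⟩ := h
      exact (hUB''.2 R hRP _ _ hlt.le).1 hRxy
    | tail _ h ih =>
      obtain ⟨hlt, R, hRP, hRxy⟩ := h
      exact hR''trans ih ((hUB''.2 R hRP _ _ hlt.le).1 hRxy)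
  have hWr'' : ∀ {x y}, Relation.ReflTransGen (MubProof.W0 P) x y → R'' x y := by
    intro x y h
    rcases Relation.reflTransGen_iff_eq_or_transGen.mp h with heq | ht
    · rw [heq]; exact hR''refl x
    · exact hWc'' ht
  have hSc'' : ∀ {x y}, MubProof.Sc P x y → SPref R'' x y := by
    intro x y h
    obtain ⟨u, v, h1, h2, h3⟩ := h
    obtain ⟨hltuv, R, hRP, hsp⟩ := h2
    have hspuv : SPref R'' u v := (hUB''.2 R hRP _ _ hltuv.le).2 hsp
    have hxu : R'' x u := hWr'' h1
    have hvy : R'' v y := hWr'' h3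
    refine ⟨hR''trans (hR''trans hxu hspuv.1) hvy, fun hyx => hspuv.2 ?_⟩
    exact hR''trans (hR''trans hvy hyx) hxu
  intro x y hyx
  constructor
  · intro hRs
    rcases hyx.lt_or_eq with hlt | heq
    · by_cases hq : Q x y
      · exact hWc'' (mainW hlt hq)
      · exfalso
        rcases patCmp hlt with h | h
        · exact hq h
        · exact hRsStrict h hq hRs
    · rw [heq]; exact hR''refl x
  · intro hsp
    rcases hyx.lt_or_eq with hlt | heq
    · apply hSc''
      by_contra hns
      exact hsp.2 (hQRs (Relation.ReflTransGen.single (Or.inr ⟨hlt, hns⟩)))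
    · exfalso
      rw [heq] at hsp
      exact hsp.2 (hQRs (hQrefl x))
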